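/- arXiv:2210.00025 — 3 statements merged into one kernel-verified Lean document; each statement's English description precedes it below -/
import Mathlib

section
/- Consider a K-armed stochastic bandit with deterministic tie-breaking. Suppose the base algorithm Π satisfies IIData. Under the reward-stack model (where for each arm a and timestep t, rewards R_{a,t} are pre-sampled i.i.d. from the arm distributions), the sequence of actions taken by Artificial Replay(Π) with historical dataset H^hist equals, pointwise on every sample path, the sequence of actions taken by Full Start(Π) with the same historical dataset. Consequently the regrets of the two algorithms are equal as random variables on this coupled probability space. -/
open Finset

/-- Independence of irrelevant data for a deterministic bandit algorithm. -/
def IIData {A : Type*} (Pi : Multiset (A × ℝ) → A) : Prop :=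
  ∀ (H H' : Multiset (A × ℝ)), (∀ p ∈ H', p.1 ≠ Pi H) → Pi (H + H') = Pi H

variable {K : ℕ}

/-- Number of samples of arm `a` in a dataset. -/
def pulls (D : Multiset (Fin K × ℝ)) (a : Fin K) : ℕ :=
  Multiset.card (D.filter fun p => p.1 = a)

/-- Dataset formed by the first `u a` historical samples of each arm. -/
def usedData (hist : Fin K → List ℝ) (u : Fin K → ℕ) : Multiset (Fin K × ℝ) :=
  ∑ a : Fin K, (((hist a).take (u a)).map fun r => (a, r) : Multiset (Fin K × ℝ))

/-- Full Start online history after `t` timesteps, under the reward-stack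
model: the `k`-th pull of arm `a` yields the pre-sampled reward `R a k`. -/
def fsOnline (Pi : Multiset (Fin K × ℝ) → Fin K) (histD : Multiset (Fin K × ℝ))
    (R : Fin K → ℕ → ℝ) : ℕ → Multiset (Fin K × ℝ)
  | 0 => 0
  | t + 1 =>
    let D := fsOnline Pi histD R t
    let a := Pi (histD + D)
    D + {(a, R a (pulls D a))}

/-- The action Full Start takes at time `t`. -/
def fsAction (Pi : Multiset (Fin K × ℝ) → Fin K) (histD : Multiset (Fin K × ℝ))
    (R : Fin K → ℕ → ℝ) (t : ℕ) : Fin K :=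
  Pi (histD + fsOnline Pi histD R t)

/-- One timestep of Artificial Replay (with fuel bounding the inner while
loop): repeatedly propose `Pi(used historical data + online data)`; if the
proposed arm has an unused historical sample, consume it; otherwise play the
proposed arm online, observing the reward-stack reward.  Returns the new state
(consumption counters, online history) and the action played. -/
def arStep (Pi : Multiset (Fin K × ℝ) → Fin K) (hist : Fin K → List ℝ)
    (R : Fin K → ℕ → ℝ) :
    ℕ → (Fin K → ℕ) × Multiset (Fin K × ℝ) →
      ((Fin K → ℕ) × Multiset (Fin K × ℝ)) × Fin K
  | 0, (u, D) => ((u, D), Pi (usedData hist u + D))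
  | fuel + 1, (u, D) =>
    let a := Pi (usedData hist u + D)
    if u a < (hist a).length then
      arStep Pi hist R fuel (Function.update u a (u a + 1), D)
    else
      ((u, D + {(a, R a (pulls D a))}), a)

/-- State of Artificial Replay after `t` timesteps. -/
def arState (Pi : Multiset (Fin K × ℝ) → Fin K) (hist : Fin K → List ℝ)
    (R : Fin K → ℕ → ℝ) : ℕ → (Fin K → ℕ) × Multiset (Fin K × ℝ)
  | 0 => (fun _ => 0, 0)
  | t + 1 =>
    (arStep Pi hist R ((∑ a : Fin K, (hist a).length) + 1) (arState Pi hist R t)).1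

/-- The action Artificial Replay plays online at time `t`. -/
def arAction (Pi : Multiset (Fin K × ℝ) → Fin K) (hist : Fin K → List ℝ)
    (R : Fin K → ℕ → ℝ) (t : ℕ) : Fin K :=
  (arStep Pi hist R ((∑ a : Fin K, (hist a).length) + 1) (arState Pi hist R t)).2

/-- Regret over horizon `T` of a policy whose online history is `D`. -/
noncomputable def regretOf [NeZero K] (μ : Fin K → ℝ) (T : ℕ)
    (D : Multiset (Fin K × ℝ)) : ℝ :=
  T * (Finset.univ.sup' Finset.univ_nonempty μ) - (D.map fun p => μ p.1).sum


def extraData (hist : Fin K → List ℝ) (u : Fin K → ℕ) : Multiset (Fin K × ℝ) :=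
  ∑ a : Fin K, (((hist a).drop (u a)).map fun r => (a, r) : Multiset (Fin K × ℝ))

lemma usedData_split (hist : Fin K → List ℝ) (u : Fin K → ℕ) :
    usedData hist (fun a => (hist a).length) = usedData hist u + extraData hist u := by
  rw [usedData, usedData, extraData, ← Finset.sum_add_distrib]
  refine Finset.sum_congr rfl fun a _ => ?_
  rw [List.take_length]
  conv_lhs => rw [← List.take_append_drop (u a) (hist a)]
  rw [List.map_append]
  exact_mod_cast (Multiset.coe_add _ _)

lemma mem_extraData {hist : Fin K → List ℝ} {u : Fin K → ℕ} {p : Fin K × ℝ}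
    (hp : p ∈ extraData hist u) : u p.1 < (hist p.1).length := by
  rw [extraData, Multiset.mem_sum] at hp
  obtain ⟨a, -, hpa⟩ := hp
  rw [Multiset.mem_coe, List.mem_map] at hpa
  obtain ⟨r, hr, rfl⟩ := hpa
  have : (hist a).drop (u a) ≠ [] := List.ne_nil_of_mem hr
  rw [ne_eq, List.drop_eq_nil_iff, not_le] at this
  simpa using this

lemma arStep_spec (Pi : Multiset (Fin K × ℝ) → Fin K) (hPi : IIData Pi)
    (hist : Fin K → List ℝ) (R : Fin K → ℕ → ℝ) :
    ∀ fuel (u : Fin K → ℕ) (D : Multiset (Fin K × ℝ)),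
      (∀ a, u a ≤ (hist a).length) →
      (∑ a : Fin K, ((hist a).length - u a)) < fuel →
      (arStep Pi hist R fuel (u, D)).2
          = Pi (usedData hist (fun a => (hist a).length) + D) ∧
      (arStep Pi hist R fuel (u, D)).1.2
          = D + {((arStep Pi hist R fuel (u, D)).2,
              R (arStep Pi hist R fuel (u, D)).2
                (pulls D (arStep Pi hist R fuel (u, D)).2))} ∧
      ∀ b, (arStep Pi hist R fuel (u, D)).1.1 b ≤ (hist b).length := by
  intro fuel
  induction fuel with
  | zero => intro u D hu hf; omega
  | succ n ih =>
    intro u D hu hf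
    set a := Pi (usedData hist u + D) with ha
    by_cases hlt : u a < (hist a).length
    · have hstep : arStep Pi hist R (n+1) (u, D)
          = arStep Pi hist R n (Function.update u a (u a + 1), D) := by
        rw [arStep]; simp [← ha, hlt]
      rw [hstep]
      refine ih _ _ (fun b => ?_) ?_
      · by_cases hb : b = a
        · subst hb; simpa using hlt
        · simp [Function.update_of_ne hb, hu b]
      · have key : ∑ b : Fin K, ((hist b).length - Function.update u a (u a + 1) b)
            = (∑ b : Fin K, ((hist b).length - u b)) - 1 := by
          rw [← Finset.sum_erase_add _ _ (Finset.mem_univ a),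
            ← Finset.sum_erase_add _ _ (Finset.mem_univ a)]
          have : ∀ b ∈ Finset.univ.erase a,
              (hist b).length - Function.update u a (u a + 1) b
                = (hist b).length - u b := by
            intro b hb
            rw [Function.update_of_ne (Finset.ne_of_mem_erase hb)]
          rw [Finset.sum_congr rfl this, Function.update_self]
          omega
        have pos : 1 ≤ ∑ b : Fin K, ((hist b).length - u b) := by
          calc 1 ≤ (hist a).length - u a := by omega
          _ ≤ _ := Finset.single_le_sum (f := fun b => (hist b).length - u b)
              (fun b _ => Nat.zero_le _) (Finset.mem_univ a)
        omega
    · have hstep : arStep Pi hist R (n+1) (u, D)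
          = ((u, D + {(a, R a (pulls D a))}), a) := by
        rw [arStep]; simp [← ha, hlt]
      have hfull : Pi (usedData hist (fun b => (hist b).length) + D) = a := by
        rw [usedData_split hist u, add_right_comm, ha]
        refine hPi _ _ fun p hp => ?_
        intro hpa
        have := mem_extraData hp
        rw [hpa] at this
        exact hlt this
      rw [hstep]
      exact ⟨hfull.symm, by simp, hu⟩

/-- Sample-path coupling: if the base algorithm `Pi` satisfies IIData, then on
every reward-stack sample path, Artificial Replay and Full Start (with the
same historical dataset) produce identical online histories and action
sequences, and hence identical regret. -/
theorem stmt1 [NeZero K] (Pi : Multiset (Fin K × ℝ) → Fin K) (hPi : IIData Pi)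
    (hist : Fin K → List ℝ) (R : Fin K → ℕ → ℝ) (μ : Fin K → ℝ) :
    (∀ t, (arState Pi hist R t).2 =
      fsOnline Pi (usedData hist fun a => (hist a).length) R t) ∧
    (∀ t, arAction Pi hist R t =
      fsAction Pi (usedData hist fun a => (hist a).length) R t) ∧
    ∀ T : ℕ, regretOf μ T ((arState Pi hist R T).2) =
      regretOf μ T (fsOnline Pi (usedData hist fun a => (hist a).length) R T) := by
  have key : ∀ t, ((arState Pi hist R t).2 =
      fsOnline Pi (usedData hist fun a => (hist a).length) R t) ∧
      ∀ b, (arState Pi hist R t).1 b ≤ (hist b).length := by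
    intro t
    induction t with
    | zero => exact ⟨rfl, fun b => Nat.zero_le _⟩
    | succ t iht =>
      obtain ⟨hD, hu⟩ := iht
      have hfuel : (∑ a : Fin K, ((hist a).length - (arState Pi hist R t).1 a))
          < (∑ a : Fin K, (hist a).length) + 1 := by
        have := Finset.sum_le_sum (s := Finset.univ)
          (f := fun a => (hist a).length - (arState Pi hist R t).1 a)
          (g := fun a => (hist a).length) (fun a _ => Nat.sub_le _ _)
        exact Nat.lt_succ_of_le this
      obtain ⟨hact, hD', hu'⟩ := arStep_spec Pi hPi hist R
        ((∑ a : Fin K, (hist a).length) + 1)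
        (arState Pi hist R t).1 (arState Pi hist R t).2 hu hfuel
      constructor
      · show (arStep Pi hist R _ (arState Pi hist R t)).1.2 = _
        rw [show (arState Pi hist R t) = ((arState Pi hist R t).1, (arState Pi hist R t).2)
          from rfl] at *
        rw [hD', hact, hD, fsOnline]
      · intro b
        show (arStep Pi hist R _ (arState Pi hist R t)).1.1 b ≤ _
        rw [show (arState Pi hist R t) = ((arState Pi hist R t).1, (arState Pi hist R t).2)
          from rfl]
        exact hu' b
  have hhist : ∀ t, (arState Pi hist R t).2 =
      fsOnline Pi (usedData hist fun a => (hist a).length) R t := fun t => (key t).1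
  have hact : ∀ t, arAction Pi hist R t =
      fsAction Pi (usedData hist fun a => (hist a).length) R t := by
    intro t
    obtain ⟨hD, hu⟩ := key t
    have hfuel : (∑ a : Fin K, ((hist a).length - (arState Pi hist R t).1 a))
        < (∑ a : Fin K, (hist a).length) + 1 := by
      have := Finset.sum_le_sum (s := Finset.univ)
        (f := fun a => (hist a).length - (arState Pi hist R t).1 a)
        (g := fun a => (hist a).length) (fun a _ => Nat.sub_le _ _)
      exact Nat.lt_succ_of_le this
    obtain ⟨ha, -, -⟩ := arStep_spec Pi hPi hist R
      ((∑ a : Fin K, (hist a).length) + 1)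
      (arState Pi hist R t).1 (arState Pi hist R t).2 hu hfuel
    show (arStep Pi hist R _ (arState Pi hist R t)).2 = _
    rw [show (arState Pi hist R t) = ((arState Pi hist R t).1, (arState Pi hist R t).2)
      from rfl]
    rw [ha, hD, fsAction]
  exact ⟨hhist, hact, fun T => by rw [hhist T]⟩
end

section
/- The Monotone UCB algorithm (MonUCB) satisfies the IIData property: if a = MonUCB(H) is the arm maximizing the monotone upper confidence index computed from dataset H (with deterministic tie-breaking), then for any additional dataset H' containing only samples of arms other than a, MonUCB(H ∪ H') = a. This follows because adding data for an arm a' ≠ a can only weakly decrease the monotone UCB index of a' and leaves the index of a unchanged. -/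
/-- MonUCB satisfies IIData.  Each arm's monotone UCB index is a function
`index` of that arm's list of samples only, and appending further samples can
only weakly decrease the index (`hmono`).  The algorithm selects the arm with
the largest index, with deterministic tie-breaking given by the *least*
maximizer (`hmax`, `htie`).  If `a` is the arm chosen from dataset `D` and the
extra dataset `D'` contains no samples of arm `a` (`hirr`), then the chosen
arm is unchanged. -/
theorem stmt2 {K : ℕ} (index : List ℝ → ℝ)
    (hmono : ∀ (l l' : List ℝ), index (l ++ l') ≤ index l)
    (select : (Fin K → ℝ) → Fin K)
    (hmax : ∀ (v : Fin K → ℝ) (b : Fin K), v b ≤ v (select v))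
    (htie : ∀ (v : Fin K → ℝ) (a : Fin K), (∀ b, v b ≤ v a) → select v ≤ a)
    (D D' : Fin K → List ℝ)
    (hirr : D' (select fun a => index (D a)) = []) :
    select (fun a => index (D a ++ D' a)) = select (fun a => index (D a)) := by
  set v : Fin K → ℝ := fun a => index (D a) with hv
  set w : Fin K → ℝ := fun a => index (D a ++ D' a) with hw
  set a := select v with ha
  have hwv : ∀ b, w b ≤ v b := fun b => hmono (D b) (D' b)
  have hwa : w a = v a := by simp [hw, hv, hirr]
  -- a maximizes w
  have hmaxw : ∀ b, w b ≤ w a := fun b =>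
    (hwv b).trans ((hmax v b).trans hwa.ge)
  have h1 : select w ≤ a := htie w a hmaxw
  -- select w maximizes v
  have h2 : a ≤ select w := by
    apply htie v (select w)
    intro b
    calc v b ≤ v a := hmax v b
    _ = w a := hwa.symm
    _ ≤ w (select w) := hmax w a
    _ ≤ v (select w) := hwv _
  exact le_antisymm h1 h2
end

section
/- Suppose a suboptimal arm a in a K-armed bandit has H_a ≥ 8 log(2TK)/Δ(a)² historical samples, for every suboptimal arm a. Then on the concentration good event, Full Start(MonUCB) never plays any suboptimal arm during the online phase: n_T(a) = 0 for all a ≠ a*. Hence the regret on the good event is 0, and the expected regret is at most Σ_a Δ(a) ≤ K. -/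
open MeasureTheory Finset in
/-- If every suboptimal arm `a` has `Ha a ≥ 8 log(2TK)/Δ(a)²` historical
samples, then on the concentration good event `E`, Full Start(MonUCB) (whose
index for arm `a` after `k` online pulls uses `k + Ha a` total samples, with
strict selection `htie` breaking ties in favor of `a*`) never plays any
suboptimal arm online: `n_T(a) = 0`.  Hence the regret on `E` is `0`, and the
expected regret is at most `Σ_a Δ(a) ≤ K`. -/
theorem stmt17 {Ω : Type*} [MeasurableSpace Ω] (P : Measure Ω) [IsProbabilityMeasure P]
    {K : ℕ} [NeZero K] (T : ℕ) (hT : 1 ≤ T)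
    (μ : Fin K → ℝ) (astar : Fin K)
    (hμ : ∀ a, μ a ∈ Set.Icc (0 : ℝ) 1)
    (hopt : ∀ a, a ≠ astar → μ a < μ astar)
    (Ha : Fin K → ℕ)
    (hH : ∀ a, a ≠ astar → 8 * Real.log (2 * T * K) / (μ astar - μ a) ^ 2 ≤ (Ha a : ℝ))
    (A : ℕ → Ω → Fin K)
    (n : ℕ → Fin K → Ω → ℕ)
    (hn : ∀ t a ω, n t a ω = ((range t).filter fun s => A s ω = a).card)
    (S : Fin K → ℕ → Ω → ℝ)
    (UCB : ℕ → Fin K → Ω → ℝ)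
    (hUCB : ∀ t a ω, UCB t a ω = (range (t + 1)).inf'
      (nonempty_range_iff.mpr (Nat.succ_ne_zero t))
      (fun τ => if n τ a ω + Ha a = 0 then 1 else
        S a (n τ a ω + Ha a) ω / (n τ a ω + Ha a) +
          Real.sqrt (2 * Real.log (2 * T * K) / (n τ a ω + Ha a))))
    (halg : ∀ ω t, t < T → ∀ b, UCB t b ω ≤ UCB t (A t ω) ω)
    (htie : ∀ ω t, t < T → A t ω ≠ astar → UCB t astar ω < UCB t (A t ω) ω)
    (E : Set Ω)
    (hE : ∀ ω ∈ E, ∀ (a : Fin K) (k : ℕ), 1 ≤ k → k ≤ T + Ha a →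
      |μ a - S a k ω / k| ≤ Real.sqrt (2 * Real.log (2 * T * K) / k))
    (hPE : (1 : ENNReal) - 1 / T ≤ P E)
    (hint : Integrable (fun ω => (T : ℝ) * μ astar - ∑ t ∈ range T, μ (A t ω)) P) :
    (∀ ω ∈ E, ∀ a, a ≠ astar → n T a ω = 0) ∧
    (∀ ω ∈ E, (T : ℝ) * μ astar - ∑ t ∈ range T, μ (A t ω) = 0) ∧
    (∫ ω, ((T : ℝ) * μ astar - ∑ t ∈ range T, μ (A t ω)) ∂P ≤
      ∑ a : Fin K, (μ astar - μ a)) ∧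
    ∑ a : Fin K, (μ astar - μ a) ≤ (K : ℝ) := by
  classical
  -- basic facts
  have hK1 : (1:ℝ) ≤ K := by exact_mod_cast Nat.one_le_iff_ne_zero.mpr (NeZero.ne K)
  have hT1 : (1:ℝ) ≤ T := by exact_mod_cast hT
  have hL : 0 < Real.log (2 * T * K) := Real.log_pos (by nlinarith)
  set L : ℝ := Real.log (2 * T * K) with hLdef
  -- the key claim: on E, the algorithm always plays astar
  have key : ∀ ω ∈ E, ∀ t, t < T → A t ω = astar := by
    intro ω hω t ht
    by_contra hne
    set a := A t ω with ha
    have hΔ : 0 < μ astar - μ a := sub_pos.mpr (hopt a hne)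
    set Δ : ℝ := μ astar - μ a with hΔdef
    have hHa : 8 * L / Δ ^ 2 ≤ (Ha a : ℝ) := hH a hne
    have hHapos : 0 < Ha a := by
      rcases Nat.eq_zero_or_pos (Ha a) with h0 | h
      · exfalso
        rw [h0] at hHa
        have : 0 < 8 * L / Δ ^ 2 := by positivity
        simpa using this.trans_le hHa
      · exact h
    have hHaR : (0:ℝ) < Ha a := by exact_mod_cast hHapos
    -- sqrt bound for arm a with k = Ha a
    have hsq : Real.sqrt (2 * L / (Ha a : ℝ)) ≤ Δ / 2 := by
      have h1 : 2 * L / (Ha a : ℝ) ≤ Δ ^ 2 / 4 := by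
        rw [div_le_div_iff₀ hHaR (by norm_num)]
        have : 8 * L ≤ (Ha a : ℝ) * Δ ^ 2 := by
          rw [div_le_iff₀ (by positivity)] at hHa
          linarith [hHa]
        nlinarith
      calc Real.sqrt (2 * L / (Ha a : ℝ)) ≤ Real.sqrt (Δ ^ 2 / 4) := Real.sqrt_le_sqrt h1
        _ = Δ / 2 := by
            rw [show Δ ^ 2 / 4 = (Δ / 2) ^ 2 by ring, Real.sqrt_sq (by positivity)]
    -- UCB of a is at most μ astar (via τ = 0)
    have hUa : UCB t a ω ≤ μ astar := by
      have hn0 : n 0 a ω = 0 := by simp [hn]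
      have hmem : (0:ℕ) ∈ range (t+1) := mem_range.mpr (Nat.succ_pos t)
      have hle := Finset.inf'_le (b := (0:ℕ))
        (f := fun τ => if n τ a ω + Ha a = 0 then 1 else
          S a (n τ a ω + Ha a) ω / (n τ a ω + Ha a) +
            Real.sqrt (2 * L / (n τ a ω + Ha a)))
        hmem
      rw [hUCB]
      refine le_trans hle ?_
      simp only [hn0, Nat.cast_zero, zero_add, Nat.zero_add]
      rw [if_neg hHapos.ne']
      have hconc := hE ω hω a (Ha a) hHapos (Nat.le_add_left _ _)
      have h2 : S a (Ha a) ω / (Ha a : ℝ) ≤ μ a + Real.sqrt (2 * L / (Ha a : ℝ)) := by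
        have := abs_le.mp hconc
        linarith [this.1]
      have : S a (Ha a) ω / (Ha a : ℝ) + Real.sqrt (2 * L / (Ha a : ℝ))
          ≤ μ a + 2 * Real.sqrt (2 * L / (Ha a : ℝ)) := by linarith
      refine this.trans ?_
      have : μ a + 2 * Real.sqrt (2 * L / (Ha a : ℝ)) ≤ μ a + 2 * (Δ / 2) := by linarith
      refine this.trans ?_
      simp [hΔdef]; ring_nf; linarith
    -- UCB of astar is at least μ astar
    have hUstar : μ astar ≤ UCB t astar ω := by
      rw [hUCB]
      refine Finset.le_inf' _ _ ?_
      intro τ hτ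
      by_cases h0 : n τ astar ω + Ha astar = 0
      · simp only [h0, if_pos rfl]
        exact (hμ astar).2
      · simp only [if_neg h0]
        have hk1 : 1 ≤ n τ astar ω + Ha astar := Nat.pos_of_ne_zero h0
        have hnτ : n τ astar ω ≤ τ := by
          rw [hn]; exact (Finset.card_filter_le _ _).trans_eq (card_range τ)
        have hkT : n τ astar ω + Ha astar ≤ T + Ha astar := by
          have : τ < T := lt_of_lt_of_le (mem_range.mp hτ) ht
          omega
        have hconc := hE ω hω astar (n τ astar ω + Ha astar) hk1 hkT
        have := abs_le.mp hconc
        push_cast at this ⊢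
        linarith [this.2]
    exact absurd ((htie ω t ht hne).trans_le (hUa.trans hUstar)) (lt_irrefl _)
  -- part 1
  have part1 : ∀ ω ∈ E, ∀ a, a ≠ astar → n T a ω = 0 := by
    intro ω hω a hane
    rw [hn]
    refine Finset.card_eq_zero.mpr ?_
    refine Finset.filter_eq_empty_iff.mpr ?_
    intro s hs
    rw [key ω hω s (mem_range.mp hs)]
    exact fun h => hane h.symm
  -- part 2
  have part2 : ∀ ω ∈ E, (T : ℝ) * μ astar - ∑ t ∈ range T, μ (A t ω) = 0 := by
    intro ω hω
    have : ∑ t ∈ range T, μ (A t ω) = ∑ t ∈ range T, μ astar := by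
      refine Finset.sum_congr rfl ?_
      intro t ht
      rw [key ω hω t (mem_range.mp ht)]
    rw [this, Finset.sum_const, card_range, nsmul_eq_mul, sub_self]
  -- nonnegativity of gaps
  have hΔnn : ∀ a : Fin K, 0 ≤ μ astar - μ a := by
    intro a
    by_cases h : a = astar
    · simp [h]
    · exact le_of_lt (sub_pos.mpr (hopt a h))
  set C : ℝ := ∑ a : Fin K, (μ astar - μ a) with hCdef
  have hCnn : 0 ≤ C := Finset.sum_nonneg fun a _ => hΔnn a
  set f : Ω → ℝ := fun ω => (T : ℝ) * μ astar - ∑ t ∈ range T, μ (A t ω) with hfdef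
  have hfnn : ∀ ω, 0 ≤ f ω := by
    intro ω
    have : ∑ t ∈ range T, μ (A t ω) ≤ ∑ t ∈ range T, μ astar :=
      Finset.sum_le_sum fun t _ => by
        by_cases h : A t ω = astar
        · simp [h]
        · exact le_of_lt (hopt _ h)
    simp only [hfdef]
    rw [Finset.sum_const, card_range, nsmul_eq_mul] at this
    linarith
  have hfbd : ∀ ω, f ω ≤ (T : ℝ) * C := by
    intro ω
    have hterm : ∀ t, μ astar - μ (A t ω) ≤ C := by
      intro t
      exact Finset.single_le_sum (f := fun a => μ astar - μ a)
        (fun a _ => hΔnn a) (Finset.mem_univ (A t ω))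
    have : ∑ t ∈ range T, (μ astar - μ (A t ω)) ≤ ∑ t ∈ range T, C :=
      Finset.sum_le_sum fun t _ => hterm t
    rw [Finset.sum_const, card_range, nsmul_eq_mul] at this
    simp only [hfdef]
    rw [Finset.sum_sub_distrib] at this
    rw [Finset.sum_const, card_range, nsmul_eq_mul] at this
    linarith
  -- part 3
  have part3 : ∫ ω, f ω ∂P ≤ C := by
    have hmf := hint.aestronglyMeasurable
    set g : Ω → ℝ := hmf.mk f with hgdef
    have hfg : f =ᵐ[P] g := hmf.ae_eq_mk
    have hgmeas : StronglyMeasurable g := hmf.stronglyMeasurable_mk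
    set B : Set Ω := {ω | 0 < g ω} with hBdef
    have hBmeas : MeasurableSet B := by
      exact measurableSet_lt measurable_const hgmeas.measurable
    -- bound P B
    have hPB : P B ≤ 1 / T := by
      set N : Set Ω := {ω | f ω ≠ g ω} with hNdef
      have hN : P N = 0 := by
        exact ae_iff.mp hfg
      have hsub : E ⊆ Bᶜ ∪ N := by
        intro ω hω
        by_cases hωN : ω ∈ N
        · exact Or.inr hωN
        · left
          have hfgω : f ω = g ω := not_not.mp hωN
          simp only [hBdef, Set.mem_compl_iff, Set.mem_setOf_eq, not_lt]
          have h0 : g ω = 0 := by rw [← hfgω]; exact part2 ω hω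
          exact le_of_eq h0
      have h1 : P E ≤ P Bᶜ := by
        calc P E ≤ P (Bᶜ ∪ N) := measure_mono hsub
          _ ≤ P Bᶜ + P N := measure_union_le _ _
          _ = P Bᶜ := by rw [hN, add_zero]
      rw [prob_compl_eq_one_sub hBmeas] at h1
      have h2 : (1:ENNReal) - 1/T ≤ 1 - P B := le_trans hPE h1
      have hPB1 : P B ≤ 1 := prob_le_one
      have h3 : (1:ENNReal) - (1 - P B) ≤ 1 - (1 - 1/T) :=
        tsub_le_tsub_left h2 1
      have hTinv : (1:ENNReal)/T ≤ 1 := by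
        apply ENNReal.div_le_of_le_mul
        rw [one_mul]
        exact_mod_cast (by exact_mod_cast hT : (1:ENNReal) ≤ (T:ℕ))
      rwa [ENNReal.sub_sub_cancel ENNReal.one_ne_top hPB1,
        ENNReal.sub_sub_cancel ENNReal.one_ne_top hTinv] at h3
    -- compare integrals
    have hind : Integrable (B.indicator fun _ => (T:ℝ) * C) P :=
      (integrable_const _).indicator hBmeas
    have hgint : Integrable g P := hint.congr hfg
    have hmono : g ≤ᵐ[P] B.indicator fun _ => (T:ℝ) * C := by
      filter_upwards [hfg] with ω hω
      by_cases hB : ω ∈ B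
      · rw [Set.indicator_of_mem hB]
        exact le_trans (le_of_eq hω.symm) (hfbd ω)
      · rw [Set.indicator_of_notMem hB]
        have : ¬ 0 < g ω := hB
        linarith [not_lt.mp this]
    calc ∫ ω, f ω ∂P = ∫ ω, g ω ∂P := integral_congr_ae hfg
      _ ≤ ∫ ω, B.indicator (fun _ => (T:ℝ) * C) ω ∂P := integral_mono_ae hgint hind hmono
      _ = (P B).toReal • ((T:ℝ) * C) := integral_indicator_const _ hBmeas
      _ ≤ ((1:ENNReal)/T).toReal * ((T:ℝ) * C) := by
          rw [smul_eq_mul]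
          refine mul_le_mul_of_nonneg_right ?_ (by positivity)
          exact ENNReal.toReal_mono (by simp [ENNReal.div_eq_top]; omega) hPB
      _ = C := by
          rw [ENNReal.toReal_div, ENNReal.toReal_one, ENNReal.toReal_natCast]
          field_simp
  -- part 4
  have part4 : C ≤ (K : ℝ) := by
    have : ∀ a ∈ (Finset.univ : Finset (Fin K)), μ astar - μ a ≤ 1 := by
      intro a _
      have h1 := (hμ astar).2
      have h2 := (hμ a).1
      linarith
    calc C ≤ (Finset.univ : Finset (Fin K)).card • (1:ℝ) :=
        Finset.sum_le_card_nsmul _ _ _ this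
      _ = (K:ℝ) := by simp
  exact ⟨part1, part2, part3, part4⟩
end
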